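/- Let K and l be positive integers, set N = K + l − 1, and let α ∈ ((l−1)/N, l/N]. Let c_1,…,c_K be nonnegative real numbers and let M ≥ max_{i ∈ {1,…,K}} c_i. Then the Conditional Value at Risk of the N values consisting of c_1,…,c_K together with l−1 copies of M satisfies CVaR^α(c_1,…,c_K, M,…,M) = (l−1)M/(αN) + (1 − (l−1)/(αN)) · max_{i ∈ {1,…,K}} c_i, and the coefficient 1 − (l−1)/(αN) is strictly positive. -/

import Mathlib

open scoped BigOperators ENNReal

/-- Conditional Value at Risk of the values `c 1, …, c N` at risk level `α`:
`CVaR^α(c) = inf_{t ∈ ℝ} ( t + (1/(α N)) Σ_i max(c i − t, 0) )`. -/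
noncomputable def cvar (N : ℕ) (α : ℝ) (c : Fin N → ℝ) : ℝ :=
  ⨅ t : ℝ, (t + 1 / (α * N) * ∑ i, max (c i - t) 0)

/-- Key identity of the NP-hardness reduction: for `N = K + l − 1`,
`α ∈ ((l−1)/N, l/N]`, nonnegative values `c_1,…,c_K` and `M ≥ max_i c_i`, the CVaR of the
`N` values consisting of `c_1,…,c_K` together with `l−1` copies of `M` equals
`(l−1)M/(αN) + (1 − (l−1)/(αN)) · max_i c_i`, and `1 − (l−1)/(αN) > 0`. -/
theorem stmt_16 (K l : ℕ) (hK : 0 < K) (hl : 0 < l) (N : ℕ) (hNdef : N = K + l - 1)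
    (α : ℝ) (hαl : ((l : ℝ) - 1) / N < α) (hαu : α ≤ (l : ℝ) / N)
    (c : Fin K → ℝ) (hc : ∀ i, 0 ≤ c i)
    (M : ℝ) (hM : ∀ i, c i ≤ M) :
    cvar N α (fun i => if h : (i : ℕ) < K then c ⟨i, h⟩ else M) =
      ((l : ℝ) - 1) * M / (α * N) +
        (1 - ((l : ℝ) - 1) / (α * N)) *
          (Finset.univ.sup' (Finset.univ_nonempty_iff.mpr ⟨⟨0, hK⟩⟩) c) ∧
      0 < 1 - ((l : ℝ) - 1) / (α * N) := by
  obtain ⟨m, rfl⟩ : ∃ m, l = m + 1 := ⟨l - 1, (Nat.succ_pred_eq_of_pos hl).symm⟩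
  have hN' : N = K + m := by omega
  subst hN'
  push_cast at hαl hαu ⊢
  simp only [add_sub_cancel_right] at hαl ⊢
  set A : ℝ := α * ((K : ℝ) + (m : ℝ)) with hAdef
  have hKm : (0 : ℝ) < (K : ℝ) + (m : ℝ) := by
    have : (1:ℝ) ≤ (K:ℝ) := by exact_mod_cast hK
    positivity
  have hα0 : 0 < α := lt_of_le_of_lt (by positivity) hαl
  have hA : 0 < A := by positivity
  have hmA : (m : ℝ) < A := (div_lt_iff₀ hKm).mp hαl
  have hA1 : A ≤ (m : ℝ) + 1 := by
    calc A = α * ((K:ℝ) + m) := rfl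
      _ ≤ (((m:ℝ)+1) / ((K:ℝ)+m)) * ((K:ℝ)+m) := by
          apply mul_le_mul_of_nonneg_right hαu (le_of_lt hKm)
      _ = (m:ℝ) + 1 := by field_simp
  set C : ℝ := Finset.univ.sup' (Finset.univ_nonempty_iff.mpr ⟨⟨0, hK⟩⟩) c with hCdef
  have hCle : ∀ i, c i ≤ C := fun i => Finset.le_sup' c (Finset.mem_univ i)
  have hCM : C ≤ M := Finset.sup'_le _ _ fun i _ => hM i
  obtain ⟨j, -, hj⟩ := Finset.exists_mem_eq_sup' (Finset.univ_nonempty_iff.mpr ⟨⟨0, hK⟩⟩) c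
  rw [← hCdef] at hj
  have hsum : ∀ t : ℝ,
      ∑ i : Fin (K+m), max ((if h : (i : ℕ) < K then c ⟨i, h⟩ else M) - t) 0
      = (∑ i : Fin K, max (c i - t) 0) + (m : ℝ) * max (M - t) 0 := by
    intro t
    rw [Fin.sum_univ_add]
    congr 1
    · apply Finset.sum_congr rfl
      intro i _
      rw [dif_pos (show ((Fin.castAdd m i : Fin (K+m)) : ℕ) < K by simp [i.isLt])]
      simp
    · rw [Finset.sum_congr rfl (fun (i : Fin m) _ => by
        rw [dif_neg (show ¬ ((Fin.natAdd K i : Fin (K+m)) : ℕ) < K by simp)]),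
        Finset.sum_const, Finset.card_univ, Fintype.card_fin, nsmul_eq_mul]
  have hfun : (fun t : ℝ => t + 1 / (α * ((K+m : ℕ) : ℝ)) *
      ∑ i : Fin (K+m), max ((if h : (i : ℕ) < K then c ⟨i, h⟩ else M) - t) 0)
      = fun t : ℝ => t + 1 / A * ((∑ i : Fin K, max (c i - t) 0) + (m : ℝ) * max (M - t) 0) := by
    funext t
    rw [hsum t]
    push_cast
    rfl
  set RHS : ℝ := (m : ℝ) * M / A + (1 - (m : ℝ) / A) * C with hRHS
  have hgC : C + 1 / A * ((∑ i : Fin K, max (c i - C) 0) + (m : ℝ) * max (M - C) 0) = RHS := by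
    have h0 : (∑ i : Fin K, max (c i - C) 0) = 0 :=
      Finset.sum_eq_zero fun i _ => max_eq_right (by linarith [hCle i])
    rw [h0, max_eq_left (by linarith), hRHS]
    field_simp
    ring
  have hlb : ∀ t : ℝ, RHS ≤ t + 1 / A * ((∑ i : Fin K, max (c i - t) 0) + (m : ℝ) * max (M - t) 0) := by
    intro t
    have hS0 : 0 ≤ ∑ i : Fin K, max (c i - t) 0 :=
      Finset.sum_nonneg fun i _ => le_max_right _ _
    have hMt : M - t ≤ max (M - t) 0 := le_max_left _ _
    have hMt0 : 0 ≤ max (M - t) 0 := le_max_right _ _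
    rw [hRHS, show (m:ℝ) * M / A + (1 - (m:ℝ)/A) * C = ((m:ℝ)*M + (A - m)*C) / A from by
        field_simp,
      show t + 1 / A * ((∑ i : Fin K, max (c i - t) 0) + (m : ℝ) * max (M - t) 0)
        = (A * t + ((∑ i : Fin K, max (c i - t) 0) + (m : ℝ) * max (M - t) 0)) / A from by
        field_simp,
      div_le_div_iff₀ hA hA]
    rcases le_total t C with ht | ht
    · have hSt : C - t ≤ ∑ i : Fin K, max (c i - t) 0 := by
        calc C - t = c j - t := by rw [hj]
          _ ≤ max (c j - t) 0 := le_max_left _ _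
          _ ≤ _ := Finset.single_le_sum (f := fun i => max (c i - t) 0)
                (fun i _ => le_max_right _ _) (Finset.mem_univ j)
      have hMt' : max (M - t) 0 = M - t := max_eq_left (by linarith)
      rw [hMt']
      nlinarith [mul_nonneg (sub_nonneg.mpr ht) (sub_nonneg.mpr hA1), hA.le]
    · have hS : (∑ i : Fin K, max (c i - t) 0) = 0 :=
        Finset.sum_eq_zero fun i _ => max_eq_right (by linarith [hCle i])
      rw [hS]
      nlinarith [mul_nonneg (sub_nonneg.mpr ht) (sub_nonneg.mpr hmA.le), hA.le,
        mul_le_mul_of_nonneg_left hMt (show (0:ℝ) ≤ m by positivity)]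
  constructor
  · unfold cvar
    rw [hfun]
    apply le_antisymm
    · exact (ciInf_le ⟨RHS, by rintro x ⟨t, rfl⟩; exact hlb t⟩ C).trans_eq hgC
    · exact le_ciInf hlb
  · rw [sub_pos, div_lt_one hA]
    exact hmA
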